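/- arXiv:0811.0062 — 5 statements merged into one kernel-verified Lean document; each statement's English description precedes it below -/
import Mathlib

section
/- With the setup of the previous lattice construction, for any two distinct lines l_1, l_2 of P^2(F_q), the vector w_{l_1} - w_{l_2} has norm zero, i.e. <w_{l_1} - w_{l_2}, w_{l_1} - w_{l_2}> = 0. -/
/-- In the Hermitian `O`-module on the points and lines of a finite projective plane
(as in the paper's construction), for two distinct lines `l₁, l₂` the vector
`w_{l₁} - w_{l₂}` has norm zero. -/
theorem norm_wl_sub_wl (q : ℕ) (O : Type*) [CommRing O] [IsDomain O] [StarRing O]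
    (hint : ∀ z : O, ∃ m : ℤ, z * star z = (m : O))
    (p : O) (hp : p * star p = (q : O))
    (Point Line : Type*) [Fintype Point] [Fintype Line]
    [DecidableEq Point] [DecidableEq Line]
    (I : Point → Line → Prop) [∀ x l, Decidable (I x l)]
    (hline : ∀ l, (Finset.univ.filter fun x => I x l).card = q + 1)
    (hmeet : ∀ l₁ l₂, l₁ ≠ l₂ → ∃! x, I x l₁ ∧ I x l₂)
    (B : ((Point ⊕ Line) →₀ O) →ₛₗ[starRingEnd O] ((Point ⊕ Line) →₀ O) →ₗ[O] O)
    (hBxx : ∀ x x', B (Finsupp.single (Sum.inl x) 1) (Finsupp.single (Sum.inl x') 1)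
      = if x = x' then -(q : O) else 0)
    (hBll : ∀ l l', B (Finsupp.single (Sum.inr l) 1) (Finsupp.single (Sum.inr l') 1)
      = if l = l' then -(q : O) else 0)
    (hBxl : ∀ x l, B (Finsupp.single (Sum.inl x) 1) (Finsupp.single (Sum.inr l) 1)
      = if I x l then p else 0)
    (hBlx : ∀ x l, B (Finsupp.single (Sum.inr l) 1) (Finsupp.single (Sum.inl x) 1)
      = if I x l then star p else 0)
    (w : Line → ((Point ⊕ Line) →₀ O))
    (hw : ∀ l, w l = star p • Finsupp.single (Sum.inr l) 1 +
      ∑ x ∈ Finset.univ.filter (fun x => I x l), Finsupp.single (Sum.inl x) 1)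
    (l₁ l₂ : Line) (hne : l₁ ≠ l₂) :
    B (w l₁ - w l₂) (w l₁ - w l₂) = 0 := by
  have hsingle : ∀ (la : Line) (x : Point) (c : O),
      (∑ x₁ ∈ Finset.univ.filter (fun y => I y la), if x₁ = x then c else 0)
        = if I x la then c else 0 := by
    intro la x c
    rw [Finset.sum_ite_eq' (Finset.univ.filter (fun y => I y la)) x (fun _ => c)]
    simp
  have hcross : ∀ (la lb : Line), la ≠ lb → ∀ (c : O),
      (∑ x ∈ Finset.univ.filter (fun y => I y la), if I x lb then c else 0) = c := by
    intro la lb h c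
    obtain ⟨x0, ⟨h1, h2⟩, hu⟩ := hmeet la lb h
    rw [Finset.sum_filter]
    have : ∀ x : Point, (if I x la then (if I x lb then c else 0) else 0)
        = if x = x0 then c else 0 := by
      intro x
      by_cases hx : x = x0
      · subst hx; simp [h1, h2]
      · rcases Classical.em (I x la) with ha | ha
        · rcases Classical.em (I x lb) with hb | hb
          · exact absurd (hu x ⟨ha, hb⟩) hx
          · simp [ha, hb, hx]
        · simp [ha, hx]
    rw [Finset.sum_congr rfl (fun x _ => this x), Finset.sum_ite_eq' Finset.univ x0 (fun _ => c)]
    simp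
  have key : ∀ l l', B (w l) (w l') = (q : O) := by
    intro l l'
    rw [hw, hw]
    simp only [map_add, map_smulₛₗ, map_sum, LinearMap.add_apply, LinearMap.smul_apply,
      LinearMap.sum_apply, map_smul, smul_eq_mul, starRingEnd_apply, star_star,
      hBll, hBlx, hBxl, hBxx, Finset.mul_sum, mul_ite, mul_zero]
    by_cases h : l = l'
    · subst h
      have e1 : (∑ x ∈ Finset.univ.filter (fun y => I y l), if I x l then p else 0)
          = (q + 1 : ℕ) • p := by
        rw [Finset.sum_congr rfl (fun x hx => by
          rw [if_pos (Finset.mem_filter.mp hx).2]), Finset.sum_const, hline]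
      simp only [if_pos rfl, e1, hsingle]
      rw [Finset.sum_congr rfl (fun x hx => by
        rw [if_pos (Finset.mem_filter.mp hx).2, if_pos (Finset.mem_filter.mp hx).2]),
        Finset.sum_const, hline]
      have hps : star p * p = (q : O) := by rw [mul_comm]; exact hp
      simp only [nsmul_eq_mul, Nat.cast_add, Nat.cast_one, if_true, RingHom.id_apply]
      linear_combination ((q : O) + 2) * hp
    · simp only [if_neg h, mul_zero, zero_add, hsingle, hcross l l' h, RingHom.id_apply]
      have h' : l' ≠ l := fun hh => h hh.symm
      have e2 : (∑ x ∈ Finset.univ.filter (fun y => I y l'),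
          ((if I x l then p * star p else 0) + if I x l then -(q:O) else 0))
          = (p * star p) + -(q : O) := by
        rw [Finset.sum_add_distrib, hcross l' l h' (p * star p), hcross l' l h' (-(q:O))]
      rw [Finset.sum_congr rfl (fun x _ => rfl), e2]
      linear_combination (2 : O) * hp
  rw [map_sub]
  simp only [LinearMap.sub_apply, map_sub, key]
  ring
end

section
/- In the lattice L_p = L^circ_p / U (quotient by the span U of all differences w_{l_1} - w_{l_2}), the image w_P of any w_l satisfies <w_P, w_P> = q. -/
/-- In the quotient lattice `L_p = L°_p / U`, where `U` is the span of all differences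
`w_{l₁} - w_{l₂}`, the image `w_P` of any `w_l` under the descended Hermitian form
satisfies `⟨w_P, w_P⟩ = q`. -/
theorem norm_wP (q : ℕ) (O : Type*) [CommRing O] [IsDomain O] [StarRing O]
    (hint : ∀ z : O, ∃ m : ℤ, z * star z = (m : O))
    (p : O) (hp : p * star p = (q : O))
    (Point Line : Type*) [Fintype Point] [Fintype Line]
    [DecidableEq Point] [DecidableEq Line]
    (I : Point → Line → Prop) [∀ x l, Decidable (I x l)]
    (hline : ∀ l, (Finset.univ.filter fun x => I x l).card = q + 1)
    (hmeet : ∀ l₁ l₂, l₁ ≠ l₂ → ∃! x, I x l₁ ∧ I x l₂)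
    (B : ((Point ⊕ Line) →₀ O) →ₛₗ[starRingEnd O] ((Point ⊕ Line) →₀ O) →ₗ[O] O)
    (hBxx : ∀ x x', B (Finsupp.single (Sum.inl x) 1) (Finsupp.single (Sum.inl x') 1)
      = if x = x' then -(q : O) else 0)
    (hBll : ∀ l l', B (Finsupp.single (Sum.inr l) 1) (Finsupp.single (Sum.inr l') 1)
      = if l = l' then -(q : O) else 0)
    (hBxl : ∀ x l, B (Finsupp.single (Sum.inl x) 1) (Finsupp.single (Sum.inr l) 1)
      = if I x l then p else 0)
    (hBlx : ∀ x l, B (Finsupp.single (Sum.inr l) 1) (Finsupp.single (Sum.inl x) 1)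
      = if I x l then star p else 0)
    (w : Line → ((Point ⊕ Line) →₀ O))
    (hw : ∀ l, w l = star p • Finsupp.single (Sum.inr l) 1 +
      ∑ x ∈ Finset.univ.filter (fun x => I x l), Finsupp.single (Sum.inl x) 1)
    (U : Submodule O ((Point ⊕ Line) →₀ O))
    (hU : U = Submodule.span O {v | ∃ l₁ l₂ : Line, v = w l₁ - w l₂})
    (B' : (((Point ⊕ Line) →₀ O) ⧸ U) →ₛₗ[starRingEnd O]
      (((Point ⊕ Line) →₀ O) ⧸ U) →ₗ[O] O)
    (hdesc : ∀ v v', B' (U.mkQ v) (U.mkQ v') = B v v') :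
    ∀ l : Line, B' (U.mkQ (w l)) (U.mkQ (w l)) = (q : O) := by
  intro l
  have hS := hline l
  rw [hdesc, hw l]
  simp only [map_add, map_smulₛₗ, map_sum, LinearMap.add_apply, LinearMap.smul_apply,
    LinearMap.coe_sum, Finset.sum_apply, starRingEnd_apply, star_star, RingHom.id_apply,
    hBll, hBxl, hBlx, hBxx, smul_eq_mul, if_true, eq_self_iff_true]
  have h1 : ∑ x ∈ Finset.univ.filter (fun x => I x l), (if I x l then p else 0)
      = ((q : O) + 1) * p := by
    rw [Finset.sum_congr rfl (fun x hx => if_pos (Finset.mem_filter.mp hx).2),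
      Finset.sum_const, hS, nsmul_eq_mul]
    push_cast; ring
  have h2 : ∑ x ∈ Finset.univ.filter (fun x => I x l),
      ((p * if I x l then star p else 0) +
        ∑ x1 ∈ Finset.univ.filter (fun x => I x l), if x1 = x then -(q : O) else 0)
      = 0 := by
    rw [Finset.sum_congr rfl (fun x hx => by
        rw [if_pos (Finset.mem_filter.mp hx).2, Finset.sum_ite_eq' _ x (fun _ => -(q : O)),
          if_pos hx, hp, add_neg_cancel]),
      Finset.sum_const, smul_zero]
  rw [h1, h2]
  linear_combination hp
end

section
/- Let V be a complex vector space with Hermitian form of signature (1,n), and let x, y be vectors of positive norm. Define d([x],[y]) = arccosh(|<x,y>| / (|x| |y|)). Then for vectors x_1, ..., x_n of positive norm with pairwise real nonnegative inner products and any z of positive norm, the maximum of d([z], [w]) over w in the convex hull Conv(x_1,...,x_n) (taken in V, all such w having positive norm) is attained at one of the vertices x_i. -/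
open scoped BigOperators

/-- The inverse hyperbolic cosine (for `x ≥ 1`): `arccosh x = log (x + √(x² - 1))`. -/
noncomputable def arccosh (x : ℝ) : ℝ := Real.log (x + Real.sqrt (x ^ 2 - 1))

/-- The standard Hermitian form of signature `(1,n)` on `ℂ^{1,n}`. -/
noncomputable def hermB (n : ℕ) (z w : Fin (n + 1) → ℂ) : ℂ :=
  (starRingEnd ℂ) (z 0) * w 0 -
    ∑ i ∈ Finset.univ.filter (fun i : Fin (n + 1) => i ≠ 0), (starRingEnd ℂ) (z i) * w i

/-- The complex hyperbolic distance between (the projective classes of) two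
positive-norm vectors: `d([x],[y]) = arccosh(|⟨x,y⟩| / (|x|·|y|))`. -/
noncomputable def chDist (n : ℕ) (x y : Fin (n + 1) → ℂ) : ℝ :=
  arccosh (‖hermB n x y‖ /
    (Real.sqrt (hermB n x x).re * Real.sqrt (hermB n y y).re))

lemma arccosh_mono {a b : ℝ} (h1 : 1 ≤ a) (hab : a ≤ b) : arccosh a ≤ arccosh b := by
  unfold arccosh
  have h0 : 0 < a + Real.sqrt (a ^ 2 - 1) := by
    have := Real.sqrt_nonneg (a ^ 2 - 1); linarith
  apply Real.log_le_log h0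
  have : Real.sqrt (a ^ 2 - 1) ≤ Real.sqrt (b ^ 2 - 1) :=
    Real.sqrt_le_sqrt (by nlinarith)
  linarith

lemma hermB_conj_symm (n : ℕ) (x y : Fin (n + 1) → ℂ) :
    (starRingEnd ℂ) (hermB n x y) = hermB n y x := by
  simp [hermB, map_sub, map_sum, map_mul, mul_comm]

lemma hermB_sum_right (n k : ℕ) (z : Fin (n + 1) → ℂ) (t : Fin k → ℝ)
    (x : Fin k → Fin (n + 1) → ℂ) :
    hermB n z (∑ j, t j • x j) = ∑ j, (t j : ℂ) * hermB n z (x j) := by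
  simp only [hermB, Finset.sum_apply, Pi.smul_apply, Complex.real_smul, Finset.mul_sum,
    mul_sub, Finset.sum_sub_distrib]
  congr 1
  · exact Finset.sum_congr rfl fun j _ => by ring
  · rw [Finset.sum_comm]
    exact Finset.sum_congr rfl fun j _ => Finset.sum_congr rfl fun i _ => by ring

lemma hermB_sum_left (n k : ℕ) (y : Fin (n + 1) → ℂ) (t : Fin k → ℝ)
    (x : Fin k → Fin (n + 1) → ℂ) :
    hermB n (∑ j, t j • x j) y = ∑ j, (t j : ℂ) * hermB n (x j) y := by
  rw [← hermB_conj_symm, hermB_sum_right, map_sum]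
  exact Finset.sum_congr rfl fun j _ => by
    rw [map_mul, Complex.conj_ofReal, hermB_conj_symm]

lemma hermB_self_re (n : ℕ) (x : Fin (n + 1) → ℂ) :
    (hermB n x x).re = ‖x 0‖ ^ 2 -
      ∑ i ∈ Finset.univ.filter (fun i : Fin (n + 1) => i ≠ 0), ‖x i‖ ^ 2 := by
  simp [hermB, Complex.sub_re, Complex.re_sum, Complex.conj_mul', ← Complex.ofReal_pow]

/-- Reverse Cauchy–Schwarz for positive vectors in signature `(1,n)`. -/
lemma revCS (n : ℕ) (x y : Fin (n + 1) → ℂ)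
    (hx : 0 < (hermB n x x).re) (hy : 0 < (hermB n y y).re) :
    (hermB n x x).re * (hermB n y y).re ≤ ‖hermB n x y‖ ^ 2 := by
  classical
  set S := Finset.univ.filter (fun i : Fin (n + 1) => i ≠ 0) with hS
  set px := ‖x 0‖ with hpx
  set py := ‖y 0‖ with hpy
  set sx2 := ∑ i ∈ S, ‖x i‖ ^ 2 with hsx2
  set sy2 := ∑ i ∈ S, ‖y i‖ ^ 2 with hsy2
  have hsx2nn : 0 ≤ sx2 := Finset.sum_nonneg fun i _ => sq_nonneg _
  have hsy2nn : 0 ≤ sy2 := Finset.sum_nonneg fun i _ => sq_nonneg _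
  have hxx : (hermB n x x).re = px ^ 2 - sx2 := hermB_self_re n x
  have hyy : (hermB n y y).re = py ^ 2 - sy2 := hermB_self_re n y
  set qx := Real.sqrt sx2 with hqx
  set qy := Real.sqrt sy2 with hqy
  have hqx2 : qx ^ 2 = sx2 := Real.sq_sqrt hsx2nn
  have hqy2 : qy ^ 2 = sy2 := Real.sq_sqrt hsy2nn
  have hpx0 : 0 < px := by nlinarith [norm_nonneg (x 0)]
  have hpy0 : 0 < py := by nlinarith [norm_nonneg (y 0)]
  have hqxpx : qx < px := by rw [hqx]; exact (Real.sqrt_lt' hpx0).2 (by nlinarith)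
  have hqypy : qy < py := by rw [hqy]; exact (Real.sqrt_lt' hpy0).2 (by nlinarith)
  have hqxnn : 0 ≤ qx := Real.sqrt_nonneg _
  have hqynn : 0 ≤ qy := Real.sqrt_nonneg _
  have hT : ‖∑ i ∈ S, (starRingEnd ℂ) (x i) * y i‖ ≤ qx * qy := by
    have h1 : ‖∑ i ∈ S, (starRingEnd ℂ) (x i) * y i‖ ≤
        ∑ i ∈ S, ‖x i‖ * ‖y i‖ := by
      refine le_trans (norm_sum_le _ _) ?_
      exact Finset.sum_congr rfl (fun i _ => by rw [norm_mul, Complex.norm_conj]) |>.le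
    have h2 : (∑ i ∈ S, ‖x i‖ * ‖y i‖) ^ 2 ≤ sx2 * sy2 :=
      Finset.sum_mul_sq_le_sq_mul_sq S _ _
    have h3 : (∑ i ∈ S, ‖x i‖ * ‖y i‖) ≤ qx * qy := by
      rw [hqx, hqy, ← Real.sqrt_mul hsx2nn]
      exact Real.le_sqrt_of_sq_le h2
    linarith
  have hB : px * py - qx * qy ≤ ‖hermB n x y‖ := by
    have hsplit : hermB n x y =
        (starRingEnd ℂ) (x 0) * y 0 - ∑ i ∈ S, (starRingEnd ℂ) (x i) * y i := rfl
    have habs0 : ‖(starRingEnd ℂ) (x 0) * y 0‖ = px * py := by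
      rw [norm_mul, Complex.norm_conj]
    calc px * py - qx * qy
        ≤ ‖(starRingEnd ℂ) (x 0) * y 0‖ -
            ‖∑ i ∈ S, (starRingEnd ℂ) (x i) * y i‖ := by
          rw [habs0]; linarith
      _ ≤ ‖hermB n x y‖ := by
          rw [hsplit]
          have := norm_add_le (((starRingEnd ℂ) (x 0) * y 0) -
            ∑ i ∈ S, (starRingEnd ℂ) (x i) * y i) (∑ i ∈ S, (starRingEnd ℂ) (x i) * y i)
          simp only [sub_add_cancel] at this
          linarith
  have hcross : 0 ≤ px * py - qx * qy := by nlinarith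
  have hsq : (px * py - qx * qy) ^ 2 ≤ ‖hermB n x y‖ ^ 2 :=
    pow_le_pow_left₀ hcross hB 2
  rw [hxx, hyy, ← hqx2, ← hqy2]
  nlinarith [sq_nonneg (px * qy - qx * py)]

/-- For positive-norm vectors `x₁,…,x_k` with pairwise real nonnegative inner
products and a positive-norm vector `z`, the maximum of `d([z],[w])` over `w` in
the convex hull `Conv(x₁,…,x_k)` is attained at one of the vertices `xᵢ`. -/
theorem chDist_max_on_convexHull (n k : ℕ) (hk : 0 < k)
    (x : Fin k → Fin (n + 1) → ℂ) (z : Fin (n + 1) → ℂ)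
    (hx : ∀ i, 0 < (hermB n (x i) (x i)).re)
    (hz : 0 < (hermB n z z).re)
    (hreal : ∀ i j, ∃ r : ℝ, 0 ≤ r ∧ hermB n (x i) (x j) = (r : ℂ)) :
    ∃ i : Fin k, ∀ t : Fin k → ℝ, (∀ j, 0 ≤ t j) → (∑ j, t j) = 1 →
      chDist n z (∑ j, t j • x j) ≤ chDist n z (x i) := by
  classical
  choose r hr0 hre using hreal
  have hbpos : ∀ j, 0 < Real.sqrt ((hermB n (x j) (x j)).re) := fun j => Real.sqrt_pos.2 (hx j)
  have hrjj : ∀ j l, Real.sqrt ((hermB n (x j) (x j)).re) * Real.sqrt ((hermB n (x l) (x l)).re)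
      ≤ r j l := by
    intro j l
    have h1 := revCS n (x j) (x l) (hx j) (hx l)
    rw [hre j l] at h1
    have habs : ‖(r j l : ℂ)‖ = r j l := by
      rw [Complex.norm_real, Real.norm_eq_abs, abs_of_nonneg (hr0 j l)]
    rw [habs] at h1
    calc Real.sqrt ((hermB n (x j) (x j)).re) * Real.sqrt ((hermB n (x l) (x l)).re)
        = Real.sqrt ((hermB n (x j) (x j)).re * (hermB n (x l) (x l)).re) :=
          (Real.sqrt_mul (hx j).le _).symm
      _ ≤ Real.sqrt ((r j l) ^ 2) := Real.sqrt_le_sqrt h1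
      _ = r j l := Real.sqrt_sq (hr0 j l)
  obtain ⟨i, -, hi⟩ := Finset.exists_max_image Finset.univ
    (fun j => ‖hermB n z (x j)‖ / Real.sqrt ((hermB n (x j) (x j)).re))
    ⟨⟨0, hk⟩, Finset.mem_univ _⟩
  refine ⟨i, fun t ht hts => ?_⟩
  set w := ∑ j, t j • x j with hw
  have hC : 0 < Real.sqrt ((hermB n z z).re) := Real.sqrt_pos.2 hz
  -- numerator bound
  have hAw : ‖hermB n z w‖ ≤ ∑ j, t j * ‖hermB n z (x j)‖ := by
    rw [hw, hermB_sum_right]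
    refine le_trans (norm_sum_le _ _) (le_of_eq ?_)
    refine Finset.sum_congr rfl fun j _ => ?_
    rw [norm_mul, Complex.norm_real, Real.norm_eq_abs, abs_of_nonneg (ht j)]
  -- B(w,w)
  have hBww : (hermB n w w).re = ∑ j, ∑ l, t j * t l * r j l := by
    have hc : hermB n w w = ∑ j, ∑ l, ((t j * t l * r j l : ℝ) : ℂ) := by
      rw [hw, hermB_sum_left]
      refine Finset.sum_congr rfl fun j _ => ?_
      rw [hermB_sum_right, Finset.mul_sum]
      refine Finset.sum_congr rfl fun l _ => ?_
      rw [hre j l]; push_cast; ring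
    rw [hc, Complex.re_sum]
    refine Finset.sum_congr rfl fun j _ => ?_
    rw [Complex.re_sum]
    exact Finset.sum_congr rfl fun l _ => Complex.ofReal_re _
  -- lower bound for B(w,w)
  set u := ∑ j, t j * Real.sqrt ((hermB n (x j) (x j)).re) with hu
  have hu2 : u ^ 2 ≤ (hermB n w w).re := by
    rw [hBww, hu, sq, Finset.sum_mul_sum]
    refine Finset.sum_le_sum fun j _ => Finset.sum_le_sum fun l _ => ?_
    have e : t j * Real.sqrt ((hermB n (x j) (x j)).re) *
        (t l * Real.sqrt ((hermB n (x l) (x l)).re)) =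
        t j * t l * (Real.sqrt ((hermB n (x j) (x j)).re) *
          Real.sqrt ((hermB n (x l) (x l)).re)) := by ring
    rw [e]
    exact mul_le_mul_of_nonneg_left (hrjj j l) (mul_nonneg (ht j) (ht l))
  have hupos : 0 < u := by
    have hex : ∃ j, 0 < t j := by
      by_contra h
      push_neg at h
      have : (∑ j, t j) ≤ 0 := Finset.sum_nonpos fun j _ => h j
      rw [hts] at this; linarith
    obtain ⟨j0, hj0⟩ := hex
    exact Finset.sum_pos' (fun j _ => mul_nonneg (ht j) (Real.sqrt_nonneg _))
      ⟨j0, Finset.mem_univ _, mul_pos hj0 (hbpos j0)⟩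
  have hBwpos : 0 < (hermB n w w).re := lt_of_lt_of_le (pow_pos hupos 2) hu2
  have husqrt : u ≤ Real.sqrt ((hermB n w w).re) := Real.le_sqrt_of_sq_le hu2
  -- the key inequality
  have key : ‖hermB n z w‖ * Real.sqrt ((hermB n (x i) (x i)).re) ≤
      ‖hermB n z (x i)‖ * Real.sqrt ((hermB n w w).re) := by
    have hstep : (∑ j, t j * ‖hermB n z (x j)‖) *
        Real.sqrt ((hermB n (x i) (x i)).re) ≤ ‖hermB n z (x i)‖ * u := by
      rw [Finset.sum_mul, hu, Finset.mul_sum]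
      refine Finset.sum_le_sum fun j _ => ?_
      have hij : ‖hermB n z (x j)‖ * Real.sqrt ((hermB n (x i) (x i)).re) ≤
          ‖hermB n z (x i)‖ * Real.sqrt ((hermB n (x j) (x j)).re) := by
        have h := hi j (Finset.mem_univ j)
        rw [div_le_div_iff₀ (hbpos j) (hbpos i)] at h
        exact h
      calc t j * ‖hermB n z (x j)‖ * Real.sqrt ((hermB n (x i) (x i)).re)
          = t j * (‖hermB n z (x j)‖ * Real.sqrt ((hermB n (x i) (x i)).re)) := by
            ring
        _ ≤ t j * (‖hermB n z (x i)‖ * Real.sqrt ((hermB n (x j) (x j)).re)) :=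
            mul_le_mul_of_nonneg_left hij (ht j)
        _ = ‖hermB n z (x i)‖ * (t j * Real.sqrt ((hermB n (x j) (x j)).re)) := by
            ring
    calc ‖hermB n z w‖ * Real.sqrt ((hermB n (x i) (x i)).re)
        ≤ (∑ j, t j * ‖hermB n z (x j)‖) * Real.sqrt ((hermB n (x i) (x i)).re) :=
          mul_le_mul_of_nonneg_right hAw (Real.sqrt_nonneg _)
      _ ≤ ‖hermB n z (x i)‖ * u := hstep
      _ ≤ ‖hermB n z (x i)‖ * Real.sqrt ((hermB n w w).re) :=
          mul_le_mul_of_nonneg_left husqrt (norm_nonneg _)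
  -- conclude
  show arccosh _ ≤ arccosh _
  apply arccosh_mono
  · -- 1 ≤ |B(z,w)| / (√B(z,z) √B(w,w))
    have hcs := revCS n z w hz hBwpos
    have hle : Real.sqrt ((hermB n z z).re) * Real.sqrt ((hermB n w w).re) ≤
        ‖hermB n z w‖ := by
      have e : (Real.sqrt ((hermB n z z).re) * Real.sqrt ((hermB n w w).re)) ^ 2 =
          (hermB n z z).re * (hermB n w w).re := by
        rw [mul_pow, Real.sq_sqrt hz.le, Real.sq_sqrt hBwpos.le]
      calc Real.sqrt ((hermB n z z).re) * Real.sqrt ((hermB n w w).re)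
          = Real.sqrt ((Real.sqrt ((hermB n z z).re) * Real.sqrt ((hermB n w w).re)) ^ 2) :=
            (Real.sqrt_sq (mul_nonneg (Real.sqrt_nonneg _) (Real.sqrt_nonneg _))).symm
        _ ≤ Real.sqrt (‖hermB n z w‖ ^ 2) :=
            Real.sqrt_le_sqrt (by rw [e]; exact hcs)
        _ = ‖hermB n z w‖ := Real.sqrt_sq (norm_nonneg _)
    exact (one_le_div (mul_pos hC (Real.sqrt_pos.2 hBwpos))).2 hle
  · rw [div_le_div_iff₀ (mul_pos hC (Real.sqrt_pos.2 hBwpos)) (mul_pos hC (hbpos i))]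
    calc ‖hermB n z w‖ * (Real.sqrt ((hermB n z z).re) * Real.sqrt ((hermB n (x i) (x i)).re))
        = Real.sqrt ((hermB n z z).re) *
            (‖hermB n z w‖ * Real.sqrt ((hermB n (x i) (x i)).re)) := by ring
      _ ≤ Real.sqrt ((hermB n z z).re) *
            (‖hermB n z (x i)‖ * Real.sqrt ((hermB n w w).re)) :=
          mul_le_mul_of_nonneg_left key hC.le
      _ = ‖hermB n z (x i)‖ *
            (Real.sqrt ((hermB n z z).re) * Real.sqrt ((hermB n w w).re)) := by ring
end

section
/- With J_F = [[3, 4p],[4*conj(p), 3]] and beta = [[p, omega],[1, conj(p)]] as above, for column vectors z, z' in C^2, writing beta z = (tau_1, tau_2)^T and beta z' = (tau_1', tau_2')^T, one has z^* J_F z' = conj(theta)(tau_1' conj(tau_2) - tau_2' conj(tau_1)); in particular z^* J_F z = 2 sqrt(3) Im(tau_1 conj(tau_2)). -/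
noncomputable section

/-- `ω = e^{2πi/3}`. -/
def ω : ℂ := Complex.exp (2 * Real.pi * Complex.I / 3)

/-- `p = 2 + ω`. -/
def p : ℂ := 2 + ω

/-- `θ = ω - conj ω`. -/
def θ : ℂ := ω - (starRingEnd ℂ) ω

/-- The matrix `β = [[p, ω], [1, conj p]]`. -/
def β : Matrix (Fin 2) (Fin 2) ℂ := !![p, ω; 1, (starRingEnd ℂ) p]

/-- The Gram matrix `J_F = [[3, 4p], [4 conj p, 3]]`. -/
def JF : Matrix (Fin 2) (Fin 2) ℂ := !![3, 4 * p; 4 * (starRingEnd ℂ) p, 3]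

lemma omega_eq : ω = (-1 + (Real.sqrt 3 : ℂ) * Complex.I) / 2 := by
  have harg : (2 * Real.pi * Complex.I / 3 : ℂ) = ((2 * Real.pi / 3 : ℝ) : ℂ) * Complex.I := by
    push_cast; ring
  have hcos : Real.cos (2 * Real.pi / 3) = -(1 / 2) := by
    have : (2 * Real.pi / 3 : ℝ) = Real.pi - Real.pi / 3 := by ring
    rw [this, Real.cos_pi_sub, Real.cos_pi_div_three]
  have hsin : Real.sin (2 * Real.pi / 3) = Real.sqrt 3 / 2 := by
    have : (2 * Real.pi / 3 : ℝ) = Real.pi - Real.pi / 3 := by ring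
    rw [this, Real.sin_pi_sub, Real.sin_pi_div_three]
  rw [ω, harg, Complex.exp_mul_I]
  have h1 : Complex.cos ((2 * Real.pi / 3 : ℝ) : ℂ) = ((-(1/2) : ℝ) : ℂ) := by
    rw [← Complex.ofReal_cos, hcos]
  have h2 : Complex.sin ((2 * Real.pi / 3 : ℝ) : ℂ) = ((Real.sqrt 3 / 2 : ℝ) : ℂ) := by
    rw [← Complex.ofReal_sin, hsin]
  rw [h1, h2]
  push_cast
  ring

lemma sqrt3_sq : ((Real.sqrt 3 : ℂ)) ^ 2 = 3 := by
  rw [← Complex.ofReal_pow, Real.sq_sqrt (by norm_num : (3:ℝ) ≥ 0)]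
  norm_num

lemma conj_theta : (starRingEnd ℂ) θ = -(Real.sqrt 3 : ℂ) * Complex.I := by
  rw [θ, omega_eq]
  simp [map_div₀, map_add, map_mul, map_sub, Complex.conj_ofReal, Complex.conj_I,
    Complex.conj_ofNat]
  ring

lemma part1 (z z' : Fin 2 → ℂ) :
    dotProduct (star z) (JF.mulVec z') =
      (starRingEnd ℂ) θ * (β.mulVec z' 0 * (starRingEnd ℂ) (β.mulVec z 1) -
        β.mulVec z' 1 * (starRingEnd ℂ) (β.mulVec z 0)) := by
  have hI : Complex.I ^ 2 = -1 := Complex.I_sq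
  have hs := sqrt3_sq
  simp only [dotProduct, Matrix.mulVec, Fin.sum_univ_two, JF, β,
    Matrix.cons_val', Matrix.cons_val_zero, Matrix.cons_val_one, Matrix.head_cons,
    Matrix.empty_val', Matrix.cons_val_fin_one, Matrix.head_fin_const, Matrix.of_apply,
    Pi.star_apply, RCLike.star_def]
  rw [p, θ, omega_eq]
  simp only [map_div₀, map_add, map_mul, map_sub, map_neg, map_one, map_ofNat,
    Complex.conj_ofReal, Complex.conj_I, Complex.conj_ofNat]
  set a := (starRingEnd ℂ) (z 0)
  set b := (starRingEnd ℂ) (z 1)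
  set x := z' 0
  set y := z' 1
  set s := (Real.sqrt 3 : ℂ)
  linear_combination (b*y*Complex.I^2 + 2*b*x*Complex.I^2 + (1/4)*b*x*s*Complex.I^3
      + 2*a*y*Complex.I^2 - (1/4)*a*y*s*Complex.I^3 + a*x*Complex.I^2) * hs
    + (3*b*y + 6*b*x + (3/4)*b*x*s*Complex.I + 6*a*y - (3/4)*a*y*s*Complex.I + 3*a*x) * hI

/-- For `z, z' ∈ ℂ²`, writing `βz = (τ₁, τ₂)ᵀ` and `βz' = (τ₁', τ₂')ᵀ`, one has
`z* J_F z' = conj(θ)(τ₁' conj(τ₂) - τ₂' conj(τ₁))`; in particular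
`z* J_F z = 2√3 · Im(τ₁ conj(τ₂))`. -/
theorem inner_via_beta (z z' : Fin 2 → ℂ) :
    dotProduct (star z) (JF.mulVec z') =
      (starRingEnd ℂ) θ * (β.mulVec z' 0 * (starRingEnd ℂ) (β.mulVec z 1) -
        β.mulVec z' 1 * (starRingEnd ℂ) (β.mulVec z 0)) ∧
    dotProduct (star z) (JF.mulVec z) =
      ((2 * Real.sqrt 3 * (β.mulVec z 0 * (starRingEnd ℂ) (β.mulVec z 1)).im : ℝ) : ℂ) := by
  refine ⟨part1 z z', ?_⟩
  rw [part1 z z]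
  set u := β.mulVec z 0 * (starRingEnd ℂ) (β.mulVec z 1) with hu
  have hconj : β.mulVec z 1 * (starRingEnd ℂ) (β.mulVec z 0) = (starRingEnd ℂ) u := by
    rw [hu]; simp [map_mul]; ring
  rw [hconj, conj_theta]
  have hsub := Complex.sub_conj u
  push_cast
  rw [hsub]
  have hI : Complex.I ^ 2 = -1 := Complex.I_sq
  push_cast
  linear_combination (- Real.sqrt 3 * 2 * u.im) * hI

end
end

section
/- Let g = [[a,b],[c,d]] in SL_2(Z) and g_1 = beta^{-1} g beta with beta = [[p, omega],[1, conj(p)]], p = 2+omega. Then g_1 satisfies g_1^* J_F g_1 = J_F (it is an isometry of the Hermitian form J_F = [[3,4p],[4 conj(p),3]]). Moreover g_1 has all entries in E = Z[omega] if and only if p_1 divides p(a-d) + (b+c) in E, where p_1 = 3 - omega. -/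
noncomputable section

/-- `p₁ = 3 - ω` (a prime of norm 13 in `ℤ[ω]`). -/
def p₁ : ℂ := 3 - ω

lemma omega_cube : ω ^ 3 = 1 := by
  rw [ω, ← Complex.exp_nat_mul]
  rw [show (3:ℕ) * (2 * Real.pi * Complex.I / 3) = 2 * Real.pi * Complex.I by push_cast; ring]
  exact Complex.exp_two_pi_mul_I

lemma omega_ne_one : ω ≠ 1 := by
  intro h
  rw [ω, Complex.exp_eq_one_iff] at h
  obtain ⟨k, hk⟩ := h
  have hπ : (Real.pi : ℂ) ≠ 0 := by exact_mod_cast Real.pi_ne_zero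
  have h2 : 2 * (Real.pi:ℂ) * Complex.I ≠ 0 := by
    simp [hπ, Complex.I_ne_zero]
  have h3 : (3 * (k:ℂ)) = 1 :=
    mul_left_cancel₀ h2 (by linear_combination (-3 : ℂ) * hk)
  have : (3 * k : ℤ) = 1 := by exact_mod_cast h3
  omega

lemma omega_sq : ω ^ 2 + ω + 1 = 0 := by
  have h := omega_cube
  have h1 : (ω - 1) * (ω ^ 2 + ω + 1) = 0 := by linear_combination h
  rcases mul_eq_zero.1 h1 with h2 | h2
  · exact absurd (by linear_combination h2) omega_ne_one
  · exact h2

lemma omega_mul_conj : ω * (starRingEnd ℂ) ω = 1 := by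
  rw [ω, ← Complex.exp_conj, ← Complex.exp_add]
  rw [show (starRingEnd ℂ) (2 * Real.pi * Complex.I / 3) = -(2 * Real.pi * Complex.I / 3) by
    simp [map_div₀, Complex.conj_I, map_ofNat]; ring]
  simp

lemma omega_ne_zero : ω ≠ 0 := by
  intro h
  have := omega_cube
  rw [h] at this
  norm_num at this

lemma conj_omega : (starRingEnd ℂ) ω = -1 - ω := by
  have h : ω * ((starRingEnd ℂ) ω) = ω * (-1 - ω) := by
    rw [omega_mul_conj]; linear_combination omega_sq
  exact mul_left_cancel₀ omega_ne_zero h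

lemma conj_p : (starRingEnd ℂ) p = 1 - ω := by
  rw [show p = 2 + ω from rfl, map_add, conj_omega, map_ofNat]
  ring

lemma beta_eq : β = !![2 + ω, ω; 1, 1 - ω] := by
  rw [show β = !![p, ω; 1, (starRingEnd ℂ) p] from rfl, conj_p, show p = 2 + ω from rfl]

lemma p1_ne : (3 : ℂ) - ω ≠ 0 := by
  intro h
  have hω : ω = 3 := by linear_combination -h
  have := omega_sq
  rw [hω] at this
  norm_num at this

lemma beta_det : β.det = 3 - ω := by
  rw [beta_eq, Matrix.det_fin_two_of]
  linear_combination -omega_sq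

lemma beta_inv : β⁻¹ = ((3:ℂ) - ω)⁻¹ • !![1 - ω, -ω; -1, 2 + ω] := by
  rw [Matrix.inv_def, beta_eq, Matrix.adjugate_fin_two_of, Matrix.det_fin_two_of,
    Ring.inverse_eq_inv']
  rw [show (2 + ω) * (1 - ω) - ω * 1 = 3 - ω by linear_combination -omega_sq]

/-- For `g = [[a,b],[c,d]] ∈ SL₂(ℤ)`, the conjugate `g₁ = β⁻¹ g β` is an isometry of
the Hermitian form `J_F`, and all entries of `g₁` lie in `E = ℤ[ω]` if and only if
`p₁ = 3 - ω` divides `p(a-d) + (b+c)` in `E`. -/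
theorem conjugated_matrix_integral_iff (a b c d : ℤ) (h : a * d - b * c = 1) :
    letI g : Matrix (Fin 2) (Fin 2) ℂ := !![(a : ℂ), (b : ℂ); (c : ℂ), (d : ℂ)]
    letI g₁ : Matrix (Fin 2) (Fin 2) ℂ := β⁻¹ * g * β
    g₁.conjTranspose * JF * g₁ = JF ∧
    ((∀ i j, ∃ m n : ℤ, g₁ i j = (m : ℂ) + (n : ℂ) * ω) ↔
      ∃ m n : ℤ, p * ((a : ℂ) - (d : ℂ)) + ((b : ℂ) + (c : ℂ)) =
        p₁ * ((m : ℂ) + (n : ℂ) * ω)) := by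
  have hω := omega_sq
  set g : Matrix (Fin 2) (Fin 2) ℂ := !![(a : ℂ), (b : ℂ); (c : ℂ), (d : ℂ)] with hg
  set g₁ : Matrix (Fin 2) (Fin 2) ℂ := β⁻¹ * g * β with hg₁def
  constructor
  · -- the isometry property
    set S : Matrix (Fin 2) (Fin 2) ℂ := !![0, 1; -1, 0] with hS
    have hβu : IsUnit β.det := by rw [beta_det]; exact (p1_ne).isUnit
    have hβ1 : β * β⁻¹ = 1 := Matrix.mul_nonsing_inv β hβu
    have h1 : (β⁻¹).conjTranspose * β.conjTranspose = 1 := by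
      rw [← Matrix.conjTranspose_mul, hβ1, Matrix.conjTranspose_one]
    have h1' : ∀ Z : Matrix (Fin 2) (Fin 2) ℂ,
        (β⁻¹).conjTranspose * (β.conjTranspose * Z) = Z := by
      intro Z; rw [← Matrix.mul_assoc, h1, Matrix.one_mul]
    have h2' : ∀ Z : Matrix (Fin 2) (Fin 2) ℂ, β * (β⁻¹ * Z) = Z := by
      intro Z; rw [← Matrix.mul_assoc, hβ1, Matrix.one_mul]
    have hgS : g.conjTranspose * S * g = S := by
      ext i j
      fin_cases i <;> fin_cases j <;>
        simp [Matrix.mul_apply, Fin.sum_univ_two, Matrix.conjTranspose_apply, hg, hS]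
      all_goals norm_cast
      all_goals try simp only [Int.negSucc_eq]
      all_goals first
      | ring1
      | linear_combination h
      | linear_combination -h
      | linear_combination 2*h
      | linear_combination -2*h
    have hgS' : ∀ Z : Matrix (Fin 2) (Fin 2) ℂ,
        g.conjTranspose * (S * (g * Z)) = S * Z := by
      intro Z
      calc g.conjTranspose * (S * (g * Z)) = (g.conjTranspose * S * g) * Z := by
            simp [Matrix.mul_assoc]
        _ = S * Z := by rw [hgS]
    have hβS : (3:ℂ) • (β.conjTranspose * S * β) = (-1 - 2*ω) • JF := by
      ext i j
      fin_cases i <;> fin_cases j <;>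
        simp [Matrix.mul_apply, Fin.sum_univ_two, Matrix.conjTranspose_apply, beta_eq, hS,
          show JF = !![3, 4 * p; 4 * (starRingEnd ℂ) p, 3] from rfl, conj_p, conj_omega,
          show p = 2 + ω from rfl, map_sub, map_add, map_one, map_ofNat, Matrix.smul_apply,
          smul_eq_mul]
      · ring
      · linear_combination (11:ℂ) * hω
      · linear_combination (-11:ℂ) * hω
      · ring
    have key : g₁.conjTranspose * (β.conjTranspose * S * β) * g₁ = β.conjTranspose * S * β := by
      rw [hg₁def, Matrix.conjTranspose_mul, Matrix.conjTranspose_mul]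
      simp only [Matrix.mul_assoc, h1', h2', hgS']
    have hne : (-1 : ℂ) - 2*ω ≠ 0 := by
      intro hh
      have h12 : ω = -(1/2) := by linear_combination -hh/2
      rw [h12] at hω
      norm_num at hω
    have h5 : ((-1:ℂ) - 2*ω) • (g₁.conjTranspose * JF * g₁) = ((-1:ℂ) - 2*ω) • JF := by
      calc ((-1:ℂ) - 2*ω) • (g₁.conjTranspose * JF * g₁)
          = g₁.conjTranspose * (((-1:ℂ) - 2*ω) • JF) * g₁ := by
            rw [Matrix.mul_smul, Matrix.smul_mul]
        _ = g₁.conjTranspose * ((3:ℂ) • (β.conjTranspose * S * β)) * g₁ := by rw [hβS]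
        _ = (3:ℂ) • (g₁.conjTranspose * (β.conjTranspose * S * β) * g₁) := by
            rw [Matrix.mul_smul, Matrix.smul_mul]
        _ = (3:ℂ) • (β.conjTranspose * S * β) := by rw [key]
        _ = ((-1:ℂ) - 2*ω) • JF := hβS
    exact smul_right_injective _ hne h5
  · -- the integrality criterion
    have hg₁ : g₁ = ((3:ℂ) - ω)⁻¹ • (!![1 - ω, -ω; -1, 2 + ω] * g * !![2 + ω, ω; 1, 1 - ω]) := by
      rw [hg₁def, beta_inv, beta_eq, Matrix.smul_mul, Matrix.smul_mul]
    have he : ∀ i j, g₁ i j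
        = ((3:ℂ) - ω)⁻¹ * ((!![1 - ω, -ω; -1, 2 + ω] * g * !![2 + ω, ω; 1, 1 - ω]) i j) := by
      intro i j
      rw [hg₁]
      simp
    constructor
    · rintro hall
      obtain ⟨m, n, hmn⟩ := hall 0 0
      rw [he 0 0, inv_mul_eq_iff_eq_mul₀ p1_ne] at hmn
      simp [hg, Matrix.mul_apply, Fin.sum_univ_two] at hmn
      refine ⟨6*m - 5*a - 2*b - 2*c - d, 6*n - a + b + c + d, ?_⟩
      rw [show p = 2 + ω from rfl, show p₁ = 3 - ω from rfl]
      push_cast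
      linear_combination 6 * hmn + (5*(a:ℂ) + b + 7*c + d) * hω
    · rintro ⟨m, n, hX⟩ i j
      rw [show p = 2 + ω from rfl, show p₁ = 3 - ω from rfl] at hX
      rw [he i j, hg]
      fin_cases i <;> fin_cases j
      · refine ⟨2*a + b + c - d - 2*m, a - d - 2*n, ?_⟩
        rw [inv_mul_eq_iff_eq_mul₀ p1_ne]
        simp [Matrix.mul_apply, Fin.sum_univ_two]
        push_cast
        linear_combination (-2 : ℂ) * hX + (-(c:ℂ) - d) * hω
      · refine ⟨4*m - 2*a + 2*d - b - c, 4*n - a + d - b, ?_⟩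
        rw [inv_mul_eq_iff_eq_mul₀ p1_ne]
        simp [Matrix.mul_apply, Fin.sum_univ_two]
        push_cast
        linear_combination (4 : ℂ) * hX + (2*(d:ℂ) - c - 2*a) * hω
      · refine ⟨c - m, c - n, ?_⟩
        rw [inv_mul_eq_iff_eq_mul₀ p1_ne]
        simp [Matrix.mul_apply, Fin.sum_univ_two]
        push_cast
        linear_combination (-1 : ℂ) * hX + (2*(c:ℂ)) * hω
      · refine ⟨2*m - a - b - c + 2*d, 2*n - a + d, ?_⟩
        rw [inv_mul_eq_iff_eq_mul₀ p1_ne]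
        simp [Matrix.mul_apply, Fin.sum_univ_two]
        push_cast
        linear_combination (2 : ℂ) * hX + ((c:ℂ) - a) * hω

end
end
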